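/- Gradient characterization of critical points of the Sinkhorn function: for entrywise positive dual vectors φ^k ∈ ℝ^{n_k}, the partial derivative of the Sinkhorn function satisfies ∂S/∂φ^k_j (φ¹,…,φ^K) = (η/φ^k_j) ( μ^k_j − [P_k(𝒦 ⊙ Φ)]_j ) for all k ∈ [K] and j ∈ [n_k]. Consequently, the gradient of S vanishes at an entrywise positive point (φ¹,…,φ^K) if and only if P_k(𝒦 ⊙ Φ) = μ^k for every k ∈ [K], i.e. if and only if the plan 𝒦 ⊙ Φ is admissible. -/

import Mathlib

/-!
Gradient characterization of critical points of the Sinkhorn function: for entrywise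
positive dual vectors `φ`, the partial derivative of the Sinkhorn function
`S(φ) = η Σₖ Σⱼ μᵏⱼ log φᵏⱼ − η Σᵢ 𝒦ᵢ Φᵢ` with respect to `φᵏⱼ` equals
`(η/φᵏⱼ)(μᵏⱼ − [P_k(𝒦 ⊙ Φ)]ⱼ)`. Consequently, the gradient of `S` vanishes at an
entrywise positive point iff `P_k(𝒦 ⊙ Φ) = μᵏ` for every `k`, i.e. iff the plan
`𝒦 ⊙ Φ` is admissible.
-/

theorem sinkhorn_gradient_characterization
    (K : ℕ) (n : Fin K → ℕ)
    (μ : ∀ k, Fin (n k) → ℝ)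
    (hμ0 : ∀ k j, 0 ≤ μ k j) (hμ1 : ∀ k, ∑ j, μ k j = 1)
    (C : (∀ k, Fin (n k)) → ℝ) (hC : ∀ i, 0 ≤ C i)
    (η : ℝ) (hη : 0 < η)
    (φ : ∀ k, Fin (n k) → ℝ) (hφ : ∀ k j, 0 < φ k j) :
    (∀ (k : Fin K) (j : Fin (n k)),
      HasDerivAt
        (fun t : ℝ =>
          η * (∑ k', ∑ j', μ k' j' *
              Real.log (Function.update φ k (Function.update (φ k) j t) k' j'))
          - η * (∑ i : ∀ k', Fin (n k'), Real.exp (-C i / η) *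
              ∏ k', Function.update φ k (Function.update (φ k) j t) k' (i k')))
        ((η / φ k j) * (μ k j -
          ∑ i : ∀ k', Fin (n k'),
            if i k = j then Real.exp (-C i / η) * ∏ k', φ k' (i k') else 0))
        (φ k j)) ∧
    ((∀ (k : Fin K) (j : Fin (n k)),
        (η / φ k j) * (μ k j -
          ∑ i : ∀ k', Fin (n k'),
            if i k = j then Real.exp (-C i / η) * ∏ k', φ k' (i k') else 0) = 0) ↔
      (∀ (k : Fin K) (j : Fin (n k)),
        (∑ i : ∀ k', Fin (n k'),
          if i k = j then Real.exp (-C i / η) * ∏ k', φ k' (i k') else 0) = μ k j)) := by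
  constructor
  · intro k j
    have hφkj := hφ k j
    set r : (∀ k', Fin (n k')) → ℝ :=
      fun i => ∏ k' ∈ Finset.univ.erase k, φ k' (i k') with hr
    set B : ℝ := ∑ i : ∀ k', Fin (n k'),
      if i k = j then Real.exp (-C i / η) * r i else 0 with hB
    set D : ℝ := ∑ i : ∀ k', Fin (n k'),
      if i k = j then 0 else Real.exp (-C i / η) * ∏ k', φ k' (i k') with hD
    set c : ℝ := (∑ j' ∈ Finset.univ.erase j, μ k j' * Real.log (φ k j'))
      + ∑ k' ∈ Finset.univ.erase k, ∑ j', μ k' j' * Real.log (φ k' j') with hc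
    have e1 : ∀ t : ℝ,
        (∑ k', ∑ j', μ k' j' *
            Real.log (Function.update φ k (Function.update (φ k) j t) k' j'))
          = μ k j * Real.log t + c := by
      intro t
      rw [← Finset.add_sum_erase _ _ (Finset.mem_univ k)]
      rw [← Finset.add_sum_erase _ (fun j' => μ k j' *
        Real.log (Function.update φ k (Function.update (φ k) j t) k j'))
        (Finset.mem_univ j)]
      simp only [Function.update_self, hc]
      rw [add_assoc]
      congr 1
      congr 1
      · exact Finset.sum_congr rfl fun j' hj' => by
          rw [Function.update_of_ne (Finset.ne_of_mem_erase hj')]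
      · exact Finset.sum_congr rfl fun k' hk' => Finset.sum_congr rfl fun j' _ => by
          rw [Function.update_of_ne (Finset.ne_of_mem_erase hk')]
    have e2 : ∀ t : ℝ,
        (∑ i : ∀ k', Fin (n k'), Real.exp (-C i / η) *
            ∏ k', Function.update φ k (Function.update (φ k) j t) k' (i k'))
          = t * B + D := by
      intro t
      have key : ∀ i : ∀ k', Fin (n k'),
          Real.exp (-C i / η) *
            ∏ k', Function.update φ k (Function.update (φ k) j t) k' (i k')
          = (if i k = j then t * (Real.exp (-C i / η) * r i) else 0)
            + (if i k = j then 0 else Real.exp (-C i / η) * ∏ k', φ k' (i k')) := by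
        intro i
        have hp : ∏ k', Function.update φ k (Function.update (φ k) j t) k' (i k')
            = (Function.update (φ k) j t (i k)) * r i := by
          rw [← Finset.mul_prod_erase _ _ (Finset.mem_univ k), Function.update_self]
          congr 1
          simp only [hr]
          exact Finset.prod_congr rfl fun k' hk' => by
            rw [Function.update_of_ne (Finset.ne_of_mem_erase hk')]
        rw [hp]
        by_cases h : i k = j
        · rw [if_pos h, if_pos h, h, Function.update_self, add_zero]
          ring
        · rw [if_neg h, if_neg h, Function.update_of_ne h, zero_add,
            ← Finset.mul_prod_erase Finset.univ (fun k' => φ k' (i k')) (Finset.mem_univ k)]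
      rw [Finset.sum_congr rfl fun i _ => key i, Finset.sum_add_distrib]
      congr 1
      rw [hB, Finset.mul_sum]
      exact Finset.sum_congr rfl fun i _ => by
        by_cases h : i k = j <;> simp [h]
    have hTarget : (∑ i : ∀ k', Fin (n k'),
        if i k = j then Real.exp (-C i / η) * ∏ k', φ k' (i k') else 0)
        = φ k j * B := by
      rw [hB, Finset.mul_sum]
      refine Finset.sum_congr rfl fun i _ => ?_
      by_cases h : i k = j
      · rw [if_pos h, if_pos h,
          ← Finset.mul_prod_erase Finset.univ (fun k' => φ k' (i k')) (Finset.mem_univ k), h]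
        simp only [hr]
        ring
      · simp [h]
    have hfun : (fun t : ℝ =>
          η * (∑ k', ∑ j', μ k' j' *
              Real.log (Function.update φ k (Function.update (φ k) j t) k' j'))
          - η * (∑ i : ∀ k', Fin (n k'), Real.exp (-C i / η) *
              ∏ k', Function.update φ k (Function.update (φ k) j t) k' (i k')))
        = fun t : ℝ => η * (μ k j * Real.log t + c) - η * (t * B + D) := by
      funext t; rw [e1 t, e2 t]
    rw [hfun, hTarget]
    have hd : HasDerivAt (fun t : ℝ => η * (μ k j * Real.log t + c) - η * (t * B + D))
        (η * (μ k j * (φ k j)⁻¹) - η * (1 * B)) (φ k j) := by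
      have h1 : HasDerivAt (fun t : ℝ => μ k j * Real.log t + c)
          (μ k j * (φ k j)⁻¹) (φ k j) :=
        ((Real.hasDerivAt_log (ne_of_gt hφkj)).const_mul (μ k j)).add_const c
      have h2 : HasDerivAt (fun t : ℝ => t * B + D) (1 * B) (φ k j) :=
        ((hasDerivAt_id (φ k j)).mul_const B).add_const D
      exact (h1.const_mul η).sub (h2.const_mul η)
    convert hd using 1
    field_simp
  · constructor
    · intro h k j
      have hne : η / φ k j ≠ 0 := div_ne_zero (ne_of_gt hη) (ne_of_gt (hφ k j))
      have := h k j
      rcases mul_eq_zero.mp this with h' | h'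
      · exact absurd h' hne
      · linarith [sub_eq_zero.mp h']
    · intro h k j
      rw [h k j]
      simp
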